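/- In F_p, the sum δ(p) := (3p+1)!!! + Σ_{r=1}^{p-1} (3p+1)!!!/(3r+4) equals -1, where n!!! is the triple factorial and the quotients (3p+1)!!!/(3r+4) are the integers obtained by removing the factor (3r+4) from the triple factorial product (note 3r+4 ≤ 3p+1 for r ≤ p-1). -/

import Mathlib

open Finset

lemma prod_erase_zero_eq_neg_one (p : ℕ) [Fact p.Prime] :
    ∏ x ∈ (Finset.univ : Finset (ZMod p)).erase 0, x = -1 := by
  have hp1 : 1 < p := (Fact.out : p.Prime).one_lt
  haveI : NeZero p := ⟨by omega⟩
  rw [← ZMod.prod_Ico_one_prime (p := p)]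
  refine (Finset.prod_nbij (fun x => ((x : ℕ) : ZMod p)) ?_ ?_ ?_ ?_).symm
  · intro a ha
    simp only [mem_Ico] at ha
    simp only [mem_erase, mem_univ, and_true]
    intro h
    have := ZMod.val_cast_of_lt ha.2
    rw [h, ZMod.val_zero] at this
    omega
  · intro a ha b hb h
    simp only [coe_Ico, Set.mem_Ico] at ha hb
    have ha' := ZMod.val_cast_of_lt ha.2
    have hb' := ZMod.val_cast_of_lt hb.2
    simp only at h
    rw [h] at ha'
    omega
  · intro y hy
    simp only [coe_erase, Set.mem_diff, Set.mem_singleton_iff, mem_coe, mem_univ, true_and] at hy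
    refine ⟨y.val, ?_, ?_⟩
    · simp only [coe_Ico, Set.mem_Ico]
      refine ⟨?_, ZMod.val_lt y⟩
      have : y.val ≠ 0 := fun h => hy (by rwa [← ZMod.val_eq_zero])
      omega
    · simp [ZMod.natCast_val, ZMod.cast_id]
  · intros; rfl

/-- `δ(p) = (3p+1)!!! + ∑_{r=1}^{p-1} (3p+1)!!!/(3r+4) ≡ -1 (mod p)`, where
`(3p+1)!!! = ∏_{k=0}^{p} (3k+1)` and `(3p+1)!!!/(3r+4)` is the integer obtained by
removing the factor `3r+4 = 3(r+1)+1` from this product. -/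
theorem stmt9 {p : ℕ} (hp : p.Prime) (hp3 : 3 < p) :
    (∏ k ∈ Finset.range (p + 1), ((3 * k + 1 : ℕ) : ZMod p))
      + ∑ r ∈ Finset.Icc 1 (p - 1),
          ∏ k ∈ (Finset.range (p + 1)).erase (r + 1), ((3 * k + 1 : ℕ) : ZMod p)
      = -1 := by
  haveI : Fact p.Prime := ⟨hp⟩
  haveI : NeZero p := ⟨by omega⟩
  have h3 : (3 : ZMod p) ≠ 0 := by
    have : ¬ (p ∣ 3) := fun h => by have := Nat.le_of_dvd (by norm_num) h; omega
    simpa [show ((3:ℕ):ZMod p) = (3:ZMod p) by push_cast; ring,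
      ZMod.natCast_eq_zero_iff] using
      (not_iff_not.mpr (ZMod.natCast_eq_zero_iff 3 p)).mpr this
  set k0 : ℕ := (-(3 : ZMod p)⁻¹).val with hk0def
  have hk0cast : ((k0 : ℕ) : ZMod p) = -(3 : ZMod p)⁻¹ := by
    simp [hk0def, ZMod.natCast_val, ZMod.cast_id]
  have hk0lt : k0 < p := ZMod.val_lt _
  have hz : ((3 * k0 + 1 : ℕ) : ZMod p) = 0 := by
    push_cast
    rw [hk0cast]
    field_simp
    ring
  have hcast_inj : ∀ a b : ℕ, a < p → b < p → ((a : ZMod p) = (b : ZMod p)) → a = b := by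
    intro a b ha hb h
    have ha' := ZMod.val_cast_of_lt ha
    have hb' := ZMod.val_cast_of_lt hb
    rw [h] at ha'; omega
  have hne0 : ∀ k, k < p → k ≠ k0 → ((3 * k + 1 : ℕ) : ZMod p) ≠ 0 := by
    intro k hk hkne h
    apply hkne
    apply hcast_inj k k0 hk hk0lt
    have : (3 : ZMod p) * k = (3 : ZMod p) * k0 := by
      have h' : ((3 * k + 1 : ℕ) : ZMod p) = ((3 * k0 + 1 : ℕ) : ZMod p) := by rw [h, hz]
      push_cast at h'
      linear_combination h'
    exact mul_left_cancel₀ h3 this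
  have hk0ge2 : 2 ≤ k0 := by
    rcases Nat.lt_or_ge k0 2 with h | h
    · exfalso
      interval_cases k0
      · rw [show (3*0+1 : ℕ) = 1 by norm_num] at hz
        simp at hz
      · rw [show (3*1+1 : ℕ) = 4 by norm_num] at hz
        rw [ZMod.natCast_eq_zero_iff] at hz
        have := Nat.le_of_dvd (by norm_num) hz
        have h4 : p = 4 := by omega
        rw [h4] at hp; norm_num at hp
    · exact h
  -- first product is zero
  have h1 : (∏ k ∈ Finset.range (p + 1), ((3 * k + 1 : ℕ) : ZMod p)) = 0 :=
    Finset.prod_eq_zero (Finset.mem_range.mpr (by omega)) hz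
  rw [h1, zero_add]
  -- sum reduces to single term
  rw [Finset.sum_eq_single (k0 - 1)]
  · -- the main term
    have hk1 : k0 - 1 + 1 = k0 := by omega
    rw [hk1]
    rw [Finset.range_add_one, Finset.erase_insert_of_ne (by omega : p ≠ k0),
      Finset.prod_insert (by simp)]
    have hp1 : ((3 * p + 1 : ℕ) : ZMod p) = 1 := by
      push_cast [ZMod.natCast_self]; ring
    rw [hp1, one_mul]
    rw [← prod_erase_zero_eq_neg_one p]
    refine Finset.prod_nbij (fun k => ((3 * k + 1 : ℕ) : ZMod p)) ?_ ?_ ?_ ?_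
    · intro a ha
      simp only [Finset.mem_erase, Finset.mem_range] at ha
      simp only [Finset.mem_erase, Finset.mem_univ, and_true]
      exact hne0 a ha.2 ha.1
    · intro a ha b hb h
      simp only [Finset.coe_erase, Set.mem_diff, Finset.mem_coe, Finset.mem_range,
        Set.mem_singleton_iff] at ha hb
      simp only at h
      apply hcast_inj a b ha.1 hb.1
      push_cast at h
      have : (3 : ZMod p) * a = (3 : ZMod p) * b := by linear_combination h
      exact mul_left_cancel₀ h3 this
    · intro y hy
      simp only [Finset.coe_erase, Set.mem_diff, Finset.mem_coe, Finset.mem_univ, true_and,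
        Set.mem_singleton_iff] at hy
      refine ⟨((y - 1) * (3 : ZMod p)⁻¹).val, ?_, ?_⟩
      · have hval : ((((y - 1) * (3:ZMod p)⁻¹).val : ℕ) : ZMod p) = (y - 1) * (3:ZMod p)⁻¹ := by
          simp [ZMod.natCast_val, ZMod.cast_id]
        have heq : ((3 * ((y - 1) * (3:ZMod p)⁻¹).val + 1 : ℕ) : ZMod p) = y := by
          push_cast
          rw [hval]
          field_simp
          ring
        simp only [Finset.coe_erase, Set.mem_diff, Finset.mem_coe, Finset.mem_range,
          Set.mem_singleton_iff]
        refine ⟨ZMod.val_lt _, ?_⟩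
        intro hk
        apply hy
        rw [← heq, hk, hz]
      · push_cast
        simp [ZMod.natCast_val, ZMod.cast_id]
        field_simp
        ring
    · intros; rfl
  · -- other terms vanish
    intro r hr hrne
    simp only [Finset.mem_Icc] at hr
    apply Finset.prod_eq_zero (i := k0)
    · simp only [Finset.mem_erase, Finset.mem_range]
      exact ⟨by omega, by omega⟩
    · exact hz
  · intro h
    exfalso
    apply h
    simp only [Finset.mem_Icc]
    omega
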